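/- The eigenvalues of the SU_q(2) Casimir operator C = S⁺S⁻ + ((qT)^{−1} + qT)/(q^{−1} − q)², with T = t^{⊗L}, on (C²)^{⊗L} are of the form (q^{−(2S+1)} + q^{2S+1})/(q^{−1} − q)² for S ∈ {0, 1/2, 1, ..., L/2}. -/

import Mathlib

open scoped Classical

/-- The "string operator" acting as `ℓ` left of `x`, `c` at `x`, `ρ` right of `x`. -/
noncomputable def stringOp {L : ℕ} (ℓ c ρ : Matrix (Fin 2) (Fin 2) ℂ)
    (x : Fin L) : Matrix (Fin L → Fin 2) (Fin L → Fin 2) ℂ :=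
  fun η η' => (∏ y ∈ Finset.univ.filter (fun y => y < x), ℓ (η y) (η' y)) *
    c (η x) (η' x) *
    (∏ y ∈ Finset.univ.filter (fun y => x < y), ρ (η y) (η' y))

namespace Suq2Aux

open Finset Matrix

variable {L : ℕ} (q : ℝ)

/-- entries of `t`. -/
noncomputable def tq : Fin 2 → ℂ := fun e => if e = 0 then (q : ℂ)⁻¹ else (q : ℂ)
/-- entries of `t⁻¹`. -/
noncomputable def tqi : Fin 2 → ℂ := fun e => if e = 0 then (q : ℂ) else (q : ℂ)⁻¹

noncomputable def SP (L : ℕ) : Matrix (Fin L → Fin 2) (Fin L → Fin 2) ℂ :=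
  ∑ x : Fin L, stringOp !![(q : ℂ)⁻¹, 0; 0, (q : ℂ)] !![0, 1; 0, 0] 1 x

noncomputable def SM (L : ℕ) : Matrix (Fin L → Fin 2) (Fin L → Fin 2) ℂ :=
  ∑ x : Fin L, stringOp 1 !![0, 0; 1, 0] !![(q : ℂ), 0; 0, (q : ℂ)⁻¹] x

noncomputable def TD (L : ℕ) : Matrix (Fin L → Fin 2) (Fin L → Fin 2) ℂ :=
  Matrix.diagonal (fun η : Fin L → Fin 2 => ∏ x, tq q (η x))

noncomputable def TI (L : ℕ) : Matrix (Fin L → Fin 2) (Fin L → Fin 2) ℂ :=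
  Matrix.diagonal (fun η : Fin L → Fin 2 => ∏ x, tqi q (η x))

/-- number of down spins -/
def W (η : Fin L → Fin 2) : ℕ := ∑ x, (η x).val

lemma W_le (η : Fin L → Fin 2) : W η ≤ L := by
  have : ∀ x : Fin L, (η x).val ≤ 1 := fun x => by omega
  calc W η ≤ ∑ _x : Fin L, 1 := Finset.sum_le_sum (fun x _ => this x)
  _ = L := by simp

/-- projection onto the weight-`m` sector -/
noncomputable def P (m : ℤ) (v : (Fin L → Fin 2) → ℂ) : (Fin L → Fin 2) → ℂ :=
  fun η => if (W η : ℤ) = m then v η else 0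

lemma P_smul (m : ℤ) (c : ℂ) (v : (Fin L → Fin 2) → ℂ) : P m (c • v) = c • P m v := by
  funext η; simp only [P, Pi.smul_apply, smul_eq_mul]
  split <;> simp

lemma P_P (m : ℤ) (v : (Fin L → Fin 2) → ℂ) : P m (P m v) = P m v := by
  funext η; simp only [P]; split <;> simp_all

/-- a "pure" vector supported in sector `m` -/
lemma pure_eq_zero {m : ℤ} {v : (Fin L → Fin 2) → ℂ} (hv : P m v = v)
    (hm : m < 0 ∨ (L : ℤ) < m) : v = 0 := by
  funext η
  by_contra h
  have h1 : (W η : ℤ) = m := by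
    by_contra h2
    have := congrFun hv η
    simp only [P, if_neg h2] at this
    exact h (this ▸ rfl)
  have := W_le η
  omega

/-- matrices shifting the weight by `d` -/
def Shift (M : Matrix (Fin L → Fin 2) (Fin L → Fin 2) ℂ) (d : ℤ) : Prop :=
  ∀ η η', M η η' ≠ 0 → (W η : ℤ) = (W η' : ℤ) + d

lemma Shift.add {M N : Matrix (Fin L → Fin 2) (Fin L → Fin 2) ℂ} {d : ℤ}
    (hM : Shift M d) (hN : Shift N d) : Shift (M + N) d := by
  intro η η' h
  rcases (by by_contra hc; push_neg at hc; simp [Matrix.add_apply, hc.1, hc.2] at h :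
    M η η' ≠ 0 ∨ N η η' ≠ 0) with h' | h'
  · exact hM _ _ h'
  · exact hN _ _ h'

lemma Shift.smul {M : Matrix (Fin L → Fin 2) (Fin L → Fin 2) ℂ} {d : ℤ} (c : ℂ)
    (hM : Shift M d) : Shift (c • M) d := by
  intro η η' h
  exact hM _ _ (by intro h'; simp [Matrix.smul_apply, h'] at h)

lemma Shift.mul {M N : Matrix (Fin L → Fin 2) (Fin L → Fin 2) ℂ} {d e : ℤ}
    (hM : Shift M d) (hN : Shift N e) : Shift (M * N) (d + e) := by
  intro η η' h
  rw [Matrix.mul_apply] at h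
  obtain ⟨η₀, -, h₀⟩ := Finset.exists_ne_zero_of_sum_ne_zero h
  have h1 : M η η₀ ≠ 0 := fun h' => h₀ (by simp [h'])
  have h2 : N η₀ η' ≠ 0 := fun h' => h₀ (by simp [h'])
  have := hM _ _ h1; have := hN _ _ h2; omega

lemma Shift.diagonal (f : (Fin L → Fin 2) → ℂ) : Shift (Matrix.diagonal f) 0 := by
  intro η η' h
  by_cases he : η = η'
  · subst he; omega
  · simp [Matrix.diagonal_apply_ne _ he] at h

lemma shift_mulVec_P {M : Matrix (Fin L → Fin 2) (Fin L → Fin 2) ℂ} {d : ℤ}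
    (hM : Shift M d) (m : ℤ) (v : (Fin L → Fin 2) → ℂ) :
    M.mulVec (P m v) = P (m + d) (M.mulVec v) := by
  funext η
  simp only [Matrix.mulVec, dotProduct, P]
  rw [show (if (W η : ℤ) = m + d then ∑ η', M η η' * v η' else 0)
      = ∑ η', if (W η : ℤ) = m + d then M η η' * v η' else 0 by split <;> simp]
  refine Finset.sum_congr rfl (fun η' _ => ?_)
  by_cases hM0 : M η η' = 0
  · simp [hM0]
  · have := hM _ _ hM0
    by_cases h1 : (W η' : ℤ) = m
    · rw [if_pos h1, if_pos (by omega)]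
    · rw [if_neg h1, if_neg (by omega), mul_zero]


section Entries

variable (hq : 0 < q)

lemma fin2 (a : Fin 2) : a = 0 ∨ a = 1 := by omega

lemma tmat_apply (a b : Fin 2) :
    (!![(q : ℂ)⁻¹, 0; 0, (q : ℂ)]) a b = if a = b then tq q a else 0 := by
  fin_cases a <;> fin_cases b <;> simp [tq]

lemma tmatInv_apply (a b : Fin 2) :
    (!![(q : ℂ), 0; 0, (q : ℂ)⁻¹]) a b = if a = b then tqi q a else 0 := by
  fin_cases a <;> fin_cases b <;> simp [tqi]

lemma sp_apply (a b : Fin 2) :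
    (!![(0 : ℂ), 1; 0, 0]) a b = if a = 0 ∧ b = 1 then 1 else 0 := by
  fin_cases a <;> fin_cases b <;> simp

lemma sm_apply (a b : Fin 2) :
    (!![(0 : ℂ), 0; 1, 0]) a b = if a = 1 ∧ b = 0 then 1 else 0 := by
  fin_cases a <;> fin_cases b <;> simp

lemma SP_apply (η η' : Fin L → Fin 2) :
    SP q L η η' = ∑ x : Fin L,
      if η x = 0 ∧ η' = Function.update η x 1 then
        ∏ y ∈ Finset.univ.filter (fun y => y < x), tq q (η y) else 0 := by
  rw [SP, Matrix.sum_apply]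
  refine Finset.sum_congr rfl (fun x _ => ?_)
  show stringOp _ _ 1 x η η' = _
  rw [stringOp]
  by_cases h : η x = 0 ∧ η' = Function.update η x 1
  · obtain ⟨h0, h1⟩ := h
    rw [if_pos ⟨h0, h1⟩, h1]
    have e1 : ∀ y ∈ Finset.univ.filter (fun y => y < x),
        (!![(q : ℂ)⁻¹, 0; 0, (q : ℂ)]) (η y) (Function.update η x 1 y) = tq q (η y) := by
      intro y hy
      rw [Function.update_of_ne (ne_of_lt (Finset.mem_filter.mp hy).2), tmat_apply, if_pos rfl]
    have e2 : ∀ y ∈ Finset.univ.filter (fun y => x < y),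
        ((1 : Matrix (Fin 2) (Fin 2) ℂ)) (η y) (Function.update η x 1 y) = 1 := by
      intro y hy
      rw [Function.update_of_ne (ne_of_gt (Finset.mem_filter.mp hy).2), Matrix.one_apply_eq]
    rw [Finset.prod_congr rfl e1, Finset.prod_congr rfl e2, Finset.prod_const_one,
      sp_apply, Function.update_self, h0, if_pos ⟨rfl, rfl⟩, mul_one, mul_one]
  · rw [if_neg h]
    push_neg at h
    by_cases h0 : η x = 0
    · have h1 : η' ≠ Function.update η x 1 := h h0
      by_cases h2 : η' x = 1
      · -- some site y ≠ x disagrees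
        have h3 : ∃ y, y ≠ x ∧ η' y ≠ η y := by
          by_contra hc
          push_neg at hc
          apply h1
          funext z
          by_cases hz : z = x
          · subst hz; rw [h2, Function.update_self]
          · rw [hc z hz, Function.update_of_ne hz]
        obtain ⟨y, hyx, hy⟩ := h3
        rcases lt_or_gt_of_ne hyx with hlt | hgt
        · have hz : (∏ z ∈ Finset.univ.filter (fun z => z < x),
              (!![(q : ℂ)⁻¹, 0; 0, (q : ℂ)]) (η z) (η' z)) = 0 :=
            Finset.prod_eq_zero (Finset.mem_filter.mpr ⟨Finset.mem_univ y, hlt⟩)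
              (by rw [tmat_apply, if_neg (fun hc => hy hc.symm)])
          rw [hz, zero_mul, zero_mul]
        · have hz : (∏ z ∈ Finset.univ.filter (fun z => x < z),
              ((1 : Matrix (Fin 2) (Fin 2) ℂ)) (η z) (η' z)) = 0 :=
            Finset.prod_eq_zero (Finset.mem_filter.mpr ⟨Finset.mem_univ y, hgt⟩)
              (Matrix.one_apply_ne (fun hc => hy hc.symm))
          rw [hz, mul_zero]
      · rw [sp_apply, if_neg (fun hc => h2 hc.2)]; ring
    · rw [sp_apply, if_neg (fun hc => h0 hc.1)]; ring

lemma SM_apply (η η' : Fin L → Fin 2) :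
    SM q L η η' = ∑ x : Fin L,
      if η x = 1 ∧ η' = Function.update η x 0 then
        ∏ y ∈ Finset.univ.filter (fun y => x < y), tqi q (η y) else 0 := by
  rw [SM, Matrix.sum_apply]
  refine Finset.sum_congr rfl (fun x _ => ?_)
  show stringOp 1 _ _ x η η' = _
  rw [stringOp]
  by_cases h : η x = 1 ∧ η' = Function.update η x 0
  · obtain ⟨h0, h1⟩ := h
    rw [if_pos ⟨h0, h1⟩, h1]
    have e1 : ∀ y ∈ Finset.univ.filter (fun y => y < x),
        ((1 : Matrix (Fin 2) (Fin 2) ℂ)) (η y) (Function.update η x 0 y) = 1 := by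
      intro y hy
      rw [Function.update_of_ne (ne_of_lt (Finset.mem_filter.mp hy).2), Matrix.one_apply_eq]
    have e2 : ∀ y ∈ Finset.univ.filter (fun y => x < y),
        (!![(q : ℂ), 0; 0, (q : ℂ)⁻¹]) (η y) (Function.update η x 0 y) = tqi q (η y) := by
      intro y hy
      rw [Function.update_of_ne (ne_of_gt (Finset.mem_filter.mp hy).2), tmatInv_apply,
        if_pos rfl]
    rw [Finset.prod_congr rfl e1, Finset.prod_congr rfl e2, Finset.prod_const_one,
      sm_apply, Function.update_self, h0, if_pos ⟨rfl, rfl⟩, one_mul, one_mul]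
  · rw [if_neg h]
    push_neg at h
    by_cases h0 : η x = 1
    · have h1 : η' ≠ Function.update η x 0 := h h0
      by_cases h2 : η' x = 0
      · have h3 : ∃ y, y ≠ x ∧ η' y ≠ η y := by
          by_contra hc
          push_neg at hc
          apply h1
          funext z
          by_cases hz : z = x
          · subst hz; rw [h2, Function.update_self]
          · rw [hc z hz, Function.update_of_ne hz]
        obtain ⟨y, hyx, hy⟩ := h3
        rcases lt_or_gt_of_ne hyx with hlt | hgt
        · have hz : (∏ z ∈ Finset.univ.filter (fun z => z < x),
              ((1 : Matrix (Fin 2) (Fin 2) ℂ)) (η z) (η' z)) = 0 :=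
            Finset.prod_eq_zero (Finset.mem_filter.mpr ⟨Finset.mem_univ y, hlt⟩)
              (Matrix.one_apply_ne (fun hc => hy hc.symm))
          rw [hz, zero_mul, zero_mul]
        · have hz : (∏ z ∈ Finset.univ.filter (fun z => x < z),
              (!![(q : ℂ), 0; 0, (q : ℂ)⁻¹]) (η z) (η' z)) = 0 :=
            Finset.prod_eq_zero (Finset.mem_filter.mpr ⟨Finset.mem_univ y, hgt⟩)
              (by rw [tmatInv_apply, if_neg (fun hc => hy hc.symm)])
          rw [hz, mul_zero]
      · rw [sm_apply, if_neg (fun hc => h2 hc.2)]; ring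
    · rw [sm_apply, if_neg (fun hc => h0 hc.1)]; ring

end Entries


section ShiftWeight

lemma pure_W {m : ℤ} {v : (Fin L → Fin 2) → ℂ} (hv : P m v = v)
    {η : Fin L → Fin 2} (h : v η ≠ 0) : (W η : ℤ) = m := by
  by_contra h2
  have := congrFun hv η
  simp only [P, if_neg h2] at this
  exact h this.symm

lemma W_update (η : Fin L → Fin 2) (x : Fin L) (a : Fin 2) :
    (W (Function.update η x a) : ℤ) = (W η : ℤ) - (η x).val + a.val := by
  have h1 : ∀ y : Fin L, (Function.update η x a y).val
      = Function.update (fun y => (η y).val) x a.val y := by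
    intro y
    by_cases hy : y = x
    · subst hy; rw [Function.update_self, Function.update_self]
    · rw [Function.update_of_ne hy, Function.update_of_ne hy]
  have h2 : W (Function.update η x a) = a.val + ∑ y ∈ Finset.univ \ {x}, (η y).val := by
    rw [W, Finset.sum_congr rfl (fun y _ => h1 y)]
    exact Finset.sum_update_of_mem (Finset.mem_univ x) _ _
  have h3 : W η = (η x).val + ∑ y ∈ Finset.univ \ {x}, (η y).val := by
    rw [W, ← Finset.sum_update_of_mem (Finset.mem_univ x) (fun y => (η y).val) ((η x).val)]
    exact Finset.sum_congr rfl (fun y _ => by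
      by_cases hy : y = x
      · subst hy; rw [Function.update_self]
      · rw [Function.update_of_ne hy])
  rw [h2, h3]
  push_cast
  ring

lemma Shift_SM : Shift (SM q L) 1 := by
  intro η η' h
  rw [SM_apply] at h
  obtain ⟨x, -, hx⟩ := Finset.exists_ne_zero_of_sum_ne_zero h
  by_cases hc : η x = 1 ∧ η' = Function.update η x 0
  · obtain ⟨h1, h2⟩ := hc
    rw [h2, W_update, h1]
    simp
  · rw [if_neg hc] at hx; exact absurd rfl hx

lemma Shift_SP : Shift (SP q L) (-1) := by
  intro η η' h
  rw [SP_apply] at h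
  obtain ⟨x, -, hx⟩ := Finset.exists_ne_zero_of_sum_ne_zero h
  by_cases hc : η x = 0 ∧ η' = Function.update η x 1
  · obtain ⟨h1, h2⟩ := hc
    rw [h2, W_update, h1]
    simp
  · rw [if_neg hc] at hx; exact absurd rfl hx

lemma W_card (η : Fin L → Fin 2) :
    W η = (Finset.univ.filter (fun z => ¬ η z = 0)).card := by
  rw [W, Finset.card_filter]
  refine Finset.sum_congr rfl (fun z _ => ?_)
  rcases fin2 (η z) with h | h <;> rw [h] <;> simp

lemma prod_tq (hq0 : (q : ℂ) ≠ 0) (η : Fin L → Fin 2) :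
    ∏ z, tq q (η z) = (q : ℂ) ^ (2 * (W η : ℤ) - L) := by
  have hsplit : ∏ z, tq q (η z) =
      ((q : ℂ)⁻¹) ^ (Finset.univ.filter (fun z => η z = 0)).card *
      (q : ℂ) ^ (Finset.univ.filter (fun z => ¬ η z = 0)).card := by
    rw [show (∏ z, tq q (η z)) = ∏ z, (if η z = 0 then (q : ℂ)⁻¹ else (q : ℂ)) from rfl,
      Finset.prod_ite, Finset.prod_const, Finset.prod_const]
  have hcard : (Finset.univ.filter (fun z => η z = 0)).card +
      (Finset.univ.filter (fun z => ¬ η z = 0)).card = L := by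
    rw [Finset.card_filter_add_card_filter_not]
    simp
  rw [hsplit, ← W_card]
  have h1 : (2 * (W η : ℤ) - L) = (W η : ℤ) - ((Finset.univ.filter
      (fun z => η z = 0)).card : ℤ) := by
    rw [W_card η]; omega
  rw [h1, zpow_sub₀ hq0, zpow_natCast, zpow_natCast, inv_pow]
  ring

lemma prod_tqi (hq0 : (q : ℂ) ≠ 0) (η : Fin L → Fin 2) :
    ∏ z, tqi q (η z) = (q : ℂ) ^ ((L : ℤ) - 2 * (W η : ℤ)) := by
  have hsplit : ∏ z, tqi q (η z) =
      ((q : ℂ)) ^ (Finset.univ.filter (fun z => η z = 0)).card *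
      ((q : ℂ)⁻¹) ^ (Finset.univ.filter (fun z => ¬ η z = 0)).card := by
    rw [show (∏ z, tqi q (η z)) = ∏ z, (if η z = 0 then (q : ℂ) else (q : ℂ)⁻¹) from rfl,
      Finset.prod_ite, Finset.prod_const, Finset.prod_const]
  have hcard : (Finset.univ.filter (fun z => η z = 0)).card +
      (Finset.univ.filter (fun z => ¬ η z = 0)).card = L := by
    rw [Finset.card_filter_add_card_filter_not]
    simp
  rw [hsplit, ← W_card]
  have h1 : ((L : ℤ) - 2 * (W η : ℤ)) = ((Finset.univ.filter
      (fun z => η z = 0)).card : ℤ) - (W η : ℤ) := by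
    rw [W_card η]; omega
  rw [h1, zpow_sub₀ hq0, zpow_natCast, zpow_natCast, inv_pow, div_eq_mul_inv]

lemma TD_mulVec_pure (hq0 : (q : ℂ) ≠ 0) {m : ℤ} {v : (Fin L → Fin 2) → ℂ}
    (hv : P m v = v) : (TD q L).mulVec v = ((q : ℂ) ^ (2 * m - L)) • v := by
  funext η
  rw [TD, Matrix.mulVec_diagonal, Pi.smul_apply, smul_eq_mul]
  by_cases h : v η = 0
  · rw [h, mul_zero, mul_zero]
  · rw [prod_tq q hq0, pure_W hv h]

lemma TI_mulVec_pure (hq0 : (q : ℂ) ≠ 0) {m : ℤ} {v : (Fin L → Fin 2) → ℂ}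
    (hv : P m v = v) : (TI q L).mulVec v = ((q : ℂ) ^ ((L : ℤ) - 2 * m)) • v := by
  funext η
  rw [TI, Matrix.mulVec_diagonal, Pi.smul_apply, smul_eq_mul]
  by_cases h : v η = 0
  · rw [h, mul_zero, mul_zero]
  · rw [prod_tqi q hq0, pure_W hv h]

end ShiftWeight


section Comm

lemma mul_SP_SM (η η'' : Fin L → Fin 2) :
    (SP q L * SM q L) η η'' = ∑ x : Fin L, (if η x = 0 then
      (∏ z ∈ Finset.univ.filter (fun z => z < x), tq q (η z)) *
        SM q L (Function.update η x 1) η'' else 0) := by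
  rw [Matrix.mul_apply]
  have step1 : ∀ η', SP q L η η' * SM q L η' η'' = ∑ x : Fin L,
      (if η' = Function.update η x 1 then (if η x = 0 then
        (∏ z ∈ Finset.univ.filter (fun z => z < x), tq q (η z)) * SM q L η' η''
        else 0) else 0) := by
    intro η'
    rw [SP_apply, Finset.sum_mul]
    refine Finset.sum_congr rfl (fun x _ => ?_)
    by_cases h1 : η x = 0 <;> by_cases h2 : η' = Function.update η x 1 <;>
      simp [h1, h2]
  rw [Finset.sum_congr rfl (fun η' _ => step1 η'), Finset.sum_comm]
  refine Finset.sum_congr rfl (fun x _ => ?_)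
  rw [Finset.sum_ite_eq' Finset.univ (Function.update η x 1)]
  simp

lemma mul_SM_SP (η η'' : Fin L → Fin 2) :
    (SM q L * SP q L) η η'' = ∑ y : Fin L, (if η y = 1 then
      (∏ z ∈ Finset.univ.filter (fun z => y < z), tqi q (η z)) *
        SP q L (Function.update η y 0) η'' else 0) := by
  rw [Matrix.mul_apply]
  have step1 : ∀ η', SM q L η η' * SP q L η' η'' = ∑ y : Fin L,
      (if η' = Function.update η y 0 then (if η y = 1 then
        (∏ z ∈ Finset.univ.filter (fun z => y < z), tqi q (η z)) * SP q L η' η''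
        else 0) else 0) := by
    intro η'
    rw [SM_apply, Finset.sum_mul]
    refine Finset.sum_congr rfl (fun y _ => ?_)
    by_cases h1 : η y = 1 <;> by_cases h2 : η' = Function.update η y 0 <;>
      simp [h1, h2]
  rw [Finset.sum_congr rfl (fun η' _ => step1 η'), Finset.sum_comm]
  refine Finset.sum_congr rfl (fun y _ => ?_)
  rw [Finset.sum_ite_eq' Finset.univ (Function.update η y 0)]
  simp

/-- the summand of `S⁺S⁻` -/
noncomputable def Fterm (η η'' : Fin L → Fin 2) (x y : Fin L) : ℂ :=
  if η x = 0 then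
    (∏ z ∈ Finset.univ.filter (fun z => z < x), tq q (η z)) *
      (if (Function.update η x 1) y = 1 ∧
          η'' = Function.update (Function.update η x 1) y 0 then
        ∏ z ∈ Finset.univ.filter (fun z => y < z), tqi q (Function.update η x 1 z)
      else 0)
  else 0

/-- the summand of `S⁻S⁺` -/
noncomputable def Gterm (η η'' : Fin L → Fin 2) (y x : Fin L) : ℂ :=
  if η y = 1 then
    (∏ z ∈ Finset.univ.filter (fun z => y < z), tqi q (η z)) *
      (if (Function.update η y 0) x = 0 ∧
          η'' = Function.update (Function.update η y 0) x 1 then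
        ∏ z ∈ Finset.univ.filter (fun z => z < x), tq q (Function.update η y 0 z)
      else 0)
  else 0

lemma offdiag (η η'' : Fin L → Fin 2) {x y : Fin L} (hxy : x ≠ y) :
    Fterm q η η'' x y = Gterm q η η'' y x := by
  have hyx : y ≠ x := hxy.symm
  have v1 : tq q (1 : Fin 2) = (q : ℂ) := by simp [tq]
  have v2 : tq q (0 : Fin 2) = (q : ℂ)⁻¹ := by simp [tq]
  have v3 : tqi q (1 : Fin 2) = (q : ℂ)⁻¹ := by simp [tqi]
  have v4 : tqi q (0 : Fin 2) = (q : ℂ) := by simp [tqi]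
  by_cases h1 : η x = 0
  · by_cases h2 : η y = 1
    · by_cases h3 : η'' = Function.update (Function.update η x 1) y 0
      · have h3' : η'' = Function.update (Function.update η y 0) x 1 := by
          rw [h3, Function.update_comm hxy]
        rw [Fterm, Gterm, Function.update_of_ne hyx, Function.update_of_ne hxy,
          if_pos h1, if_pos h2, if_pos ⟨h2, h3⟩, if_pos ⟨h1, h3'⟩]
        rcases lt_or_gt_of_ne hxy with hlt | hgt
        · have e1 : ∀ z ∈ Finset.univ.filter (fun z => y < z),
              tqi q (Function.update η x 1 z) = tqi q (η z) := by
            intro z hz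
            rw [Function.update_of_ne
              (ne_of_gt (lt_trans hlt (Finset.mem_filter.mp hz).2))]
          have e2 : ∀ z ∈ Finset.univ.filter (fun z => z < x),
              tq q (Function.update η y 0 z) = tq q (η z) := by
            intro z hz
            rw [Function.update_of_ne
              (ne_of_lt (lt_trans (Finset.mem_filter.mp hz).2 hlt))]
          rw [Finset.prod_congr rfl e1, Finset.prod_congr rfl e2]
          ring
        · -- y < x
          have hxm : x ∈ Finset.univ.filter (fun z => y < z) :=
            Finset.mem_filter.mpr ⟨Finset.mem_univ x, hgt⟩
          have hym : y ∈ Finset.univ.filter (fun z => z < x) :=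
            Finset.mem_filter.mpr ⟨Finset.mem_univ y, hgt⟩
          have e1 : ∀ z ∈ (Finset.univ.filter (fun z => y < z)).erase x,
              tqi q (Function.update η x 1 z) = tqi q (η z) := by
            intro z hz
            rw [Function.update_of_ne (Finset.mem_erase.mp hz).1]
          have e2 : ∀ z ∈ (Finset.univ.filter (fun z => z < x)).erase y,
              tq q (Function.update η y 0 z) = tq q (η z) := by
            intro z hz
            rw [Function.update_of_ne (Finset.mem_erase.mp hz).1]
          have hA : (∏ z ∈ Finset.univ.filter (fun z => y < z),
                tqi q (Function.update η x 1 z))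
              = (q : ℂ)⁻¹ * ∏ z ∈ (Finset.univ.filter (fun z => y < z)).erase x,
                tqi q (η z) := by
            rw [← Finset.mul_prod_erase _ _ hxm, Function.update_self, v3,
              Finset.prod_congr rfl e1]
          have hB : (∏ z ∈ Finset.univ.filter (fun z => z < x), tq q (η z))
              = (q : ℂ) * ∏ z ∈ (Finset.univ.filter (fun z => z < x)).erase y,
                tq q (η z) := by
            rw [← Finset.mul_prod_erase _ _ hym, h2, v1]
          have hC : (∏ z ∈ Finset.univ.filter (fun z => y < z), tqi q (η z))
              = (q : ℂ) * ∏ z ∈ (Finset.univ.filter (fun z => y < z)).erase x,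
                tqi q (η z) := by
            rw [← Finset.mul_prod_erase _ _ hxm, h1, v4]
          have hD : (∏ z ∈ Finset.univ.filter (fun z => z < x),
                tq q (Function.update η y 0 z))
              = (q : ℂ)⁻¹ * ∏ z ∈ (Finset.univ.filter (fun z => z < x)).erase y,
                tq q (η z) := by
            rw [← Finset.mul_prod_erase _ _ hym, Function.update_self, v2,
              Finset.prod_congr rfl e2]
          rw [hA, hB, hC, hD]
          ring
      · have h3' : ¬ η'' = Function.update (Function.update η y 0) x 1 := by
          rw [Function.update_comm hyx]
          exact fun hc => h3 hc
        simp only [Fterm, Gterm, Function.update_of_ne hyx, Function.update_of_ne hxy,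
          h3, h3', and_false, if_false, mul_zero, ite_self]
    · simp only [Fterm, Gterm, Function.update_of_ne hyx, h2, false_and, if_false,
        mul_zero, ite_self]
  · simp only [Fterm, Gterm, Function.update_of_ne hxy, h1, false_and, if_false,
      mul_zero, ite_self]

end Comm


section Diag

lemma diagterm (η η'' : Fin L → Fin 2) (x : Fin L) :
    Fterm q η η'' x x - Gterm q η η'' x x = if η'' = η then
      (if η x = 0 then
        (∏ z ∈ Finset.univ.filter (fun z => z < x), tq q (η z)) *
          (∏ z ∈ Finset.univ.filter (fun z => x < z), tqi q (η z))
       else -((∏ z ∈ Finset.univ.filter (fun z => z < x), tq q (η z)) *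
          (∏ z ∈ Finset.univ.filter (fun z => x < z), tqi q (η z))))
      else 0 := by
  have e1 : ∀ z ∈ Finset.univ.filter (fun z => x < z),
      tqi q (Function.update η x 1 z) = tqi q (η z) := by
    intro z hz
    rw [Function.update_of_ne (ne_of_gt (Finset.mem_filter.mp hz).2)]
  have e2 : ∀ z ∈ Finset.univ.filter (fun z => z < x),
      tq q (Function.update η x 0 z) = tq q (η z) := by
    intro z hz
    rw [Function.update_of_ne (ne_of_lt (Finset.mem_filter.mp hz).2)]
  rcases fin2 (η x) with h | h
  · have hG : Gterm q η η'' x x = 0 := by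
      rw [Gterm, if_neg (by rw [h]; decide)]
    have hu : Function.update (Function.update η x 1) x 0 = η := by
      rw [Function.update_idem, ← h, Function.update_eq_self]
    rw [hG, sub_zero, Fterm, if_pos h, Function.update_self, hu]
    by_cases h'' : η'' = η
    · rw [if_pos ⟨rfl, h''⟩, if_pos h'', if_pos h, Finset.prod_congr rfl e1]
    · rw [if_neg (fun hc => h'' hc.2), if_neg h'', mul_zero]
  · have hF : Fterm q η η'' x x = 0 := by
      rw [Fterm, if_neg (by rw [h]; decide)]
    have hu : Function.update (Function.update η x 0) x 1 = η := by
      rw [Function.update_idem, ← h, Function.update_eq_self]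
    rw [hF, zero_sub, Gterm, if_pos h, Function.update_self, hu]
    by_cases h'' : η'' = η
    · rw [if_pos ⟨rfl, h''⟩, if_pos h'', if_neg (by rw [h]; decide),
        Finset.prod_congr rfl e2]
      ring
    · rw [if_neg (fun hc => h'' hc.2), mul_zero, neg_zero, if_neg h'']

noncomputable def Phi (η : Fin L → Fin 2) : ℕ → ℂ := fun j =>
  (∏ z ∈ Finset.univ.filter (fun z : Fin L => (z : ℕ) < j), tq q (η z)) *
    ∏ z ∈ Finset.univ.filter (fun z : Fin L => ¬ (z : ℕ) < j), tqi q (η z)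

lemma Phi_L (η : Fin L → Fin 2) : Phi q η L = ∏ z, tq q (η z) := by
  rw [Phi]
  have h1 : Finset.univ.filter (fun z : Fin L => (z : ℕ) < L) = Finset.univ := by
    ext z
    simp only [Finset.mem_filter, Finset.mem_univ, true_and, iff_true]
    exact z.is_lt
  have h2 : Finset.univ.filter (fun z : Fin L => ¬ (z : ℕ) < L) = ∅ := by
    ext z
    simp only [Finset.mem_filter, Finset.mem_univ, true_and, Finset.notMem_empty,
      iff_false, not_not]
    exact z.is_lt
  rw [h1, h2, Finset.prod_empty, mul_one]

lemma Phi_0 (η : Fin L → Fin 2) : Phi q η 0 = ∏ z, tqi q (η z) := by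
  rw [Phi]
  have h1 : Finset.univ.filter (fun z : Fin L => (z : ℕ) < 0) = ∅ := by
    ext z; simp
  have h2 : Finset.univ.filter (fun z : Fin L => ¬ (z : ℕ) < 0) = Finset.univ := by
    ext z; simp
  rw [h1, h2, Finset.prod_empty, one_mul]

lemma Phi_succ (η : Fin L → Fin 2) (x : Fin L) :
    Phi q η ((x : ℕ) + 1) - Phi q η (x : ℕ) = (tq q (η x) - tqi q (η x)) *
      ((∏ z ∈ Finset.univ.filter (fun z => z < x), tq q (η z)) *
        (∏ z ∈ Finset.univ.filter (fun z => x < z), tqi q (η z))) := by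
  have e1 : Finset.univ.filter (fun z : Fin L => (z : ℕ) < (x : ℕ)) =
      Finset.univ.filter (fun z => z < x) := by
    ext z
    simp only [Finset.mem_filter, Finset.mem_univ, true_and, Fin.lt_def]
  have e2 : Finset.univ.filter (fun z : Fin L => ¬ (z : ℕ) < (x : ℕ) + 1) =
      Finset.univ.filter (fun z => x < z) := by
    ext z; simp only [Finset.mem_filter, Finset.mem_univ, true_and, Fin.lt_def]
    omega
  have e3 : Finset.univ.filter (fun z : Fin L => (z : ℕ) < (x : ℕ) + 1) =
      insert x (Finset.univ.filter (fun z => z < x)) := by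
    ext z
    simp only [Finset.mem_filter, Finset.mem_univ, true_and, Finset.mem_insert,
      Fin.lt_def, Fin.ext_iff]
    omega
  have e4 : Finset.univ.filter (fun z : Fin L => ¬ (z : ℕ) < (x : ℕ)) =
      insert x (Finset.univ.filter (fun z => x < z)) := by
    ext z
    simp only [Finset.mem_filter, Finset.mem_univ, true_and, Finset.mem_insert,
      Fin.lt_def, Fin.ext_iff]
    omega
  have hx1 : x ∉ Finset.univ.filter (fun z : Fin L => z < x) := by
    simp [lt_irrefl]
  have hx2 : x ∉ Finset.univ.filter (fun z : Fin L => x < z) := by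
    simp [lt_irrefl]
  rw [Phi, Phi, e1, e2, e3, e4, Finset.prod_insert hx1, Finset.prod_insert hx2]
  ring

lemma sum_diag (hΔ : ((q : ℂ)⁻¹ - (q : ℂ)) ≠ 0) (η : Fin L → Fin 2) :
    (∑ x : Fin L, if η x = 0 then
        (∏ z ∈ Finset.univ.filter (fun z => z < x), tq q (η z)) *
          (∏ z ∈ Finset.univ.filter (fun z => x < z), tqi q (η z))
      else -((∏ z ∈ Finset.univ.filter (fun z => z < x), tq q (η z)) *
          (∏ z ∈ Finset.univ.filter (fun z => x < z), tqi q (η z))))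
      = ((q : ℂ)⁻¹ - (q : ℂ))⁻¹ * (∏ z, tq q (η z) - ∏ z, tqi q (η z)) := by
  apply mul_left_cancel₀ hΔ
  rw [← mul_assoc, mul_inv_cancel₀ hΔ, one_mul, Finset.mul_sum]
  have key : ∀ x : Fin L, ((q : ℂ)⁻¹ - (q : ℂ)) * (if η x = 0 then
        (∏ z ∈ Finset.univ.filter (fun z => z < x), tq q (η z)) *
          (∏ z ∈ Finset.univ.filter (fun z => x < z), tqi q (η z))
      else -((∏ z ∈ Finset.univ.filter (fun z => z < x), tq q (η z)) *
          (∏ z ∈ Finset.univ.filter (fun z => x < z), tqi q (η z))))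
      = Phi q η ((x : ℕ) + 1) - Phi q η (x : ℕ) := by
    intro x
    rw [Phi_succ]
    rcases fin2 (η x) with h | h
    · rw [if_pos h, h]
      have v2 : tq q (0 : Fin 2) = (q : ℂ)⁻¹ := by simp [tq]
      have v4 : tqi q (0 : Fin 2) = (q : ℂ) := by simp [tqi]
      rw [v2, v4]
    · rw [if_neg (by rw [h]; decide), h]
      have v1 : tq q (1 : Fin 2) = (q : ℂ) := by simp [tq]
      have v3 : tqi q (1 : Fin 2) = (q : ℂ)⁻¹ := by simp [tqi]
      rw [v1, v3]
      ring
  rw [Finset.sum_congr rfl (fun x _ => key x),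
    Fin.sum_univ_eq_sum_range (fun j => Phi q η (j + 1) - Phi q η j) L,
    Finset.sum_range_sub (Phi q η) L, Phi_L, Phi_0]

lemma comm_SP_SM (hΔ : ((q : ℂ)⁻¹ - (q : ℂ)) ≠ 0) :
    SP q L * SM q L - SM q L * SP q L
      = ((q : ℂ)⁻¹ - (q : ℂ))⁻¹ • (TD q L - TI q L) := by
  ext η η''
  rw [Matrix.sub_apply, mul_SP_SM, mul_SM_SP, Matrix.smul_apply, Matrix.sub_apply,
    smul_eq_mul]
  have hF : ∀ x : Fin L, (if η x = 0 then
      (∏ z ∈ Finset.univ.filter (fun z => z < x), tq q (η z)) *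
        SM q L (Function.update η x 1) η'' else 0) = ∑ y : Fin L, Fterm q η η'' x y := by
    intro x
    rw [SM_apply]
    by_cases h : η x = 0
    · rw [if_pos h, Finset.mul_sum]
      exact Finset.sum_congr rfl (fun y _ => by rw [Fterm, if_pos h])
    · rw [if_neg h]
      exact (Finset.sum_eq_zero (fun y _ => by rw [Fterm, if_neg h])).symm
  have hG : ∀ y : Fin L, (if η y = 1 then
      (∏ z ∈ Finset.univ.filter (fun z => y < z), tqi q (η z)) *
        SP q L (Function.update η y 0) η'' else 0) = ∑ x : Fin L, Gterm q η η'' y x := by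
    intro y
    rw [SP_apply]
    by_cases h : η y = 1
    · rw [if_pos h, Finset.mul_sum]
      exact Finset.sum_congr rfl (fun x _ => by rw [Gterm, if_pos h])
    · rw [if_neg h]
      exact (Finset.sum_eq_zero (fun x _ => by rw [Gterm, if_neg h])).symm
  have hGG : (∑ y : Fin L, ∑ x : Fin L, Gterm q η η'' y x)
      = ∑ x : Fin L, ∑ y : Fin L, Gterm q η η'' y x := Finset.sum_comm
  rw [Finset.sum_congr rfl (fun x _ => hF x), Finset.sum_congr rfl (fun y _ => hG y),
    hGG, ← Finset.sum_sub_distrib]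
  have hsingle : ∀ x : Fin L,
      ((∑ y : Fin L, Fterm q η η'' x y) - ∑ y : Fin L, Gterm q η η'' y x)
        = Fterm q η η'' x x - Gterm q η η'' x x := by
    intro x
    rw [← Finset.sum_sub_distrib]
    refine Finset.sum_eq_single x (fun y _ hy => ?_) (fun h => absurd (Finset.mem_univ x) h)
    rw [sub_eq_zero, offdiag q η η'' (fun hc => hy (hc.symm))]
  rw [Finset.sum_congr rfl (fun x _ => hsingle x),
    Finset.sum_congr rfl (fun x _ => diagterm q η η'' x)]
  by_cases h'' : η'' = η
  · subst h''
    rw [Finset.sum_congr rfl (fun x _ => if_pos rfl), sum_diag q hΔ, TD, TI,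
      Matrix.diagonal_apply_eq, Matrix.diagonal_apply_eq]
  · rw [Finset.sum_congr rfl (fun x _ => if_neg h''), Finset.sum_const, TD, TI,
      Matrix.diagonal_apply_ne _ (fun hc => h'' hc.symm),
      Matrix.diagonal_apply_ne _ (fun hc => h'' hc.symm)]
    simp

end Diag


section Vec

noncomputable def gfun (q : ℝ) (L : ℕ) (m : ℤ) : ℂ :=
  ((q : ℂ)⁻¹ - (q : ℂ))⁻¹ * ((q : ℂ) ^ (2 * m - (L : ℤ)) - (q : ℂ) ^ ((L : ℤ) - 2 * m))

noncomputable def scal (q : ℝ) (L : ℕ) (m : ℤ) : ℂ :=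
  (((q : ℂ)⁻¹ - (q : ℂ)) ^ 2)⁻¹ *
    ((q : ℂ)⁻¹ * (q : ℂ) ^ ((L : ℤ) - 2 * m) + (q : ℂ) * (q : ℂ) ^ (2 * m - (L : ℤ)))

lemma comm_mulVec_pure (hq0 : (q : ℂ) ≠ 0) (hΔ : ((q : ℂ)⁻¹ - (q : ℂ)) ≠ 0) {m : ℤ}
    {v : (Fin L → Fin 2) → ℂ} (hv : P m v = v) :
    (SM q L).mulVec ((SP q L).mulVec v) = (SP q L).mulVec ((SM q L).mulVec v)
      - gfun q L m • v := by
  have h : (SP q L * SM q L).mulVec v - (SM q L * SP q L).mulVec v = gfun q L m • v := by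
    rw [← Matrix.sub_mulVec, comm_SP_SM q hΔ, Matrix.smul_mulVec, Matrix.sub_mulVec,
      TD_mulVec_pure q hq0 hv, TI_mulVec_pure q hq0 hv, ← sub_smul, smul_smul, gfun]
  rw [← Matrix.mulVec_mulVec, ← Matrix.mulVec_mulVec] at h
  have := sub_eq_iff_eq_add.mp h
  rw [this]
  abel

lemma pure_step {M : Matrix (Fin L → Fin 2) (Fin L → Fin 2) ℂ} {d : ℤ} (hM : Shift M d)
    {m : ℤ} {v : (Fin L → Fin 2) → ℂ} (hv : P m v = v) :
    P (m + d) (M.mulVec v) = M.mulVec v := by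
  conv_rhs => rw [← hv]
  rw [shift_mulVec_P hM]

lemma scal_succ (hq0 : (q : ℂ) ≠ 0) (hΔ : ((q : ℂ)⁻¹ - (q : ℂ)) ≠ 0) (L : ℕ) (m : ℤ) :
    scal q L (m + 1) = scal q L m - gfun q L (m + 1) := by
  have h1 : (q : ℂ) ^ (2 * (m + 1) - (L : ℤ)) = (q : ℂ) ^ (2 * m - (L : ℤ)) * (q : ℂ) ^ (2 : ℕ) := by
    rw [← zpow_natCast (q : ℂ) 2, ← zpow_add₀ hq0]
    congr 1
    push_cast
    ring
  have h2 : (q : ℂ) ^ ((L : ℤ) - 2 * m) = ((q : ℂ) ^ (2 * m - (L : ℤ)))⁻¹ := by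
    rw [← _root_.zpow_neg]
    congr 1
    ring
  have h3 : (q : ℂ) ^ ((L : ℤ) - 2 * (m + 1)) =
      ((q : ℂ) ^ (2 * m - (L : ℤ)))⁻¹ * ((q : ℂ) ^ (2 : ℕ))⁻¹ := by
    rw [← zpow_natCast (q : ℂ) 2, ← mul_inv, ← zpow_add₀ hq0, ← _root_.zpow_neg]
    congr 1
    push_cast
    ring
  have hΔinv : ((q : ℂ)⁻¹ - (q : ℂ))⁻¹
      = (((q : ℂ)⁻¹ - (q : ℂ)) ^ 2)⁻¹ * ((q : ℂ)⁻¹ - (q : ℂ)) := by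
    rw [sq, mul_inv, mul_assoc, inv_mul_cancel₀ hΔ, mul_one]
  rw [scal, scal, gfun, h1, h2, h3, hΔinv,
    mul_assoc ((((q : ℂ)⁻¹ - (q : ℂ)) ^ 2)⁻¹), ← mul_sub]
  congr 1
  linear_combination ((q : ℂ)⁻¹ * ((q : ℂ) ^ (2 * m - (L : ℤ)))⁻¹ +
    (q : ℂ) * (q : ℂ) ^ (2 * m - (L : ℤ))) * (mul_inv_cancel₀ hq0)


noncomputable def cf (q : ℝ) (w : ℤ) (j : ℕ) : ℂ :=
  (((q : ℂ)⁻¹ - (q : ℂ)) ^ 2)⁻¹ *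
    (((q : ℂ) ^ (j : ℤ) - (q : ℂ) ^ (-(j : ℤ))) *
      ((q : ℂ) ^ (w - (j : ℤ) + 1) - (q : ℂ) ^ ((j : ℤ) - 1 - w)))

lemma cf_zero (w : ℤ) : cf q w 0 = 0 := by simp [cf]

lemma cf_succ (hq0 : (q : ℂ) ≠ 0) (hΔ : ((q : ℂ)⁻¹ - (q : ℂ)) ≠ 0) (w : ℤ) (j : ℕ) :
    cf q w (j + 1) = cf q w j - ((q : ℂ)⁻¹ - (q : ℂ))⁻¹ *
      ((q : ℂ) ^ (w - 2 * (j : ℤ)) - (q : ℂ) ^ (2 * (j : ℤ) - w)) := by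
  have e1 : (q : ℂ) ^ ((j : ℕ) + 1 : ℤ) = (q : ℂ) ^ (j : ℤ) * q := by
    rw [← zpow_add_one₀ hq0]
  have e2 : (q : ℂ) ^ (-((j : ℕ) + 1 : ℤ)) = ((q : ℂ) ^ (j : ℤ))⁻¹ * (q : ℂ)⁻¹ := by
    rw [← mul_inv, ← zpow_add_one₀ hq0, ← _root_.zpow_neg]
  have e3 : (q : ℂ) ^ (w - ((j : ℕ) + 1 : ℤ) + 1) = (q : ℂ) ^ w * ((q : ℂ) ^ (j : ℤ))⁻¹ := by
    rw [← _root_.zpow_neg, ← zpow_add₀ hq0]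
    congr 1
    ring
  have e4 : (q : ℂ) ^ (((j : ℕ) + 1 : ℤ) - 1 - w) = (q : ℂ) ^ (j : ℤ) * ((q : ℂ) ^ w)⁻¹ := by
    rw [← _root_.zpow_neg, ← zpow_add₀ hq0]
    congr 1
    ring
  have e5 : (q : ℂ) ^ (-(j : ℤ)) = ((q : ℂ) ^ (j : ℤ))⁻¹ := by rw [_root_.zpow_neg]
  have e6 : (q : ℂ) ^ (w - (j : ℤ) + 1) = (q : ℂ) ^ w * ((q : ℂ) ^ (j : ℤ))⁻¹ * q := by
    rw [← _root_.zpow_neg, ← zpow_add₀ hq0, ← zpow_add_one₀ hq0]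
    congr 1
  have e7 : (q : ℂ) ^ ((j : ℤ) - 1 - w) = (q : ℂ) ^ (j : ℤ) * (q : ℂ)⁻¹ * ((q : ℂ) ^ w)⁻¹ := by
    rw [show ((j : ℤ) - 1 - w) = (j : ℤ) + (-1) + (-w) by ring, zpow_add₀ hq0, zpow_add₀ hq0,
      _root_.zpow_neg, _root_.zpow_neg, zpow_one]
  have e8 : (q : ℂ) ^ (w - 2 * (j : ℤ)) = (q : ℂ) ^ w * (((q : ℂ) ^ (j : ℤ))⁻¹) ^ 2 := by
    rw [← _root_.zpow_neg, ← zpow_natCast ((q : ℂ) ^ (-(j : ℤ))) 2, ← _root_.zpow_mul,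
      ← zpow_add₀ hq0]
    congr 1
    ring
  have e9 : (q : ℂ) ^ (2 * (j : ℤ) - w) = ((q : ℂ) ^ (j : ℤ)) ^ 2 * ((q : ℂ) ^ w)⁻¹ := by
    rw [← _root_.zpow_neg, ← zpow_natCast ((q : ℂ) ^ (j : ℤ)) 2, ← _root_.zpow_mul,
      ← zpow_add₀ hq0]
    congr 1
    ring
  have hΔinv : ((q : ℂ)⁻¹ - (q : ℂ))⁻¹
      = (((q : ℂ)⁻¹ - (q : ℂ)) ^ 2)⁻¹ * ((q : ℂ)⁻¹ - (q : ℂ)) := by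
    rw [sq, mul_inv, mul_assoc, inv_mul_cancel₀ hΔ, mul_one]
  simp only [cf]
  rw [hΔinv, mul_assoc ((((q : ℂ)⁻¹ - (q : ℂ)) ^ 2)⁻¹), ← mul_sub]
  congr 1
  push_cast
  rw [e1, e2, e3, e4, e5, e6, e7, e8, e9]
  ring

end Vec

theorem key {L : ℕ} {q : ℝ} (hq : 0 < q) (hq1 : q < 1) (μ : ℂ)
    (ψ : (Fin L → Fin 2) → ℂ) (hψ : ψ ≠ 0)
    (hCψ : (SP q L * SM q L +
        (((q : ℂ)⁻¹ - (q : ℂ)) ^ 2)⁻¹ • ((q : ℂ)⁻¹ • TI q L + (q : ℂ) • TD q L)).mulVec ψ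
      = μ • ψ) :
    ∃ k : ℕ, k ≤ L ∧
      μ = ((q : ℂ) ^ (-(k + 1 : ℤ)) + (q : ℂ) ^ ((k + 1 : ℕ))) /
        ((q : ℂ)⁻¹ - (q : ℂ)) ^ 2 := by
  have hq0 : (q : ℂ) ≠ 0 := Complex.ofReal_ne_zero.mpr hq.ne'
  have hΔR : q⁻¹ - q ≠ 0 := by
    have h1 : (1 : ℝ) < q⁻¹ := (one_lt_inv₀ hq).mpr hq1
    nlinarith
  have hΔ : ((q : ℂ)⁻¹ - (q : ℂ)) ≠ 0 := by
    rw [show ((q : ℂ)⁻¹ - (q : ℂ)) = ((q⁻¹ - q : ℝ) : ℂ) by push_cast; ring]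
    exact Complex.ofReal_ne_zero.mpr hΔR
  have hΔ2 : (((q : ℂ)⁻¹ - (q : ℂ)) ^ 2) ≠ 0 := pow_ne_zero _ hΔ
  have hinj : ∀ {a b : ℤ}, (q : ℂ) ^ a = (q : ℂ) ^ b → a = b := by
    intro a b h
    rw [show ((q : ℂ) ^ a) = ((q ^ a : ℝ) : ℂ) by push_cast; ring,
      show ((q : ℂ) ^ b) = ((q ^ b : ℝ) : ℂ) by push_cast; ring] at h
    exact zpow_right_injective₀ hq (ne_of_lt hq1) (Complex.ofReal_inj.mp h)
  set Cm := SP q L * SM q L +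
      (((q : ℂ)⁻¹ - (q : ℂ)) ^ 2)⁻¹ • ((q : ℂ)⁻¹ • TI q L + (q : ℂ) • TD q L) with hCm
  -- action of C on pure vectors
  have hCact : ∀ (m : ℤ) (v : (Fin L → Fin 2) → ℂ), P m v = v →
      Cm.mulVec v = (SP q L).mulVec ((SM q L).mulVec v) + scal q L m • v := by
    intro m v hv
    rw [hCm, Matrix.add_mulVec, Matrix.smul_mulVec, Matrix.add_mulVec,
      Matrix.smul_mulVec, Matrix.smul_mulVec,
      TD_mulVec_pure q hq0 hv, TI_mulVec_pure q hq0 hv, ← Matrix.mulVec_mulVec,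
      smul_smul, smul_smul, ← add_smul, smul_smul, scal]
  -- C is sector-preserving
  have hCshift : Shift Cm 0 := by
    have h1 : Shift (SP q L * SM q L) 0 := by
      have := (Shift_SP q (L := L)).mul (Shift_SM q (L := L))
      norm_num at this
      exact this
    refine h1.add (Shift.smul _ (Shift.add (Shift.smul _ ?_) (Shift.smul _ ?_)))
    · rw [TI]; exact Shift.diagonal _
    · rw [TD]; exact Shift.diagonal _
  -- C commutes with S⁻ on pure vectors
  have hCSM : ∀ (m : ℤ) (v : (Fin L → Fin 2) → ℂ), P m v = v →
      Cm.mulVec ((SM q L).mulVec v) = (SM q L).mulVec (Cm.mulVec v) := by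
    intro m v hv
    have hvm : P (m + 1) ((SM q L).mulVec v) = (SM q L).mulVec v :=
      pure_step (Shift_SM q) hv
    rw [hCact (m + 1) _ hvm, hCact m v hv, Matrix.mulVec_add, Matrix.mulVec_smul,
      comm_mulVec_pure q hq0 hΔ hvm, scal_succ q hq0 hΔ L m, sub_smul]
    abel
  -- pick a nonzero pure component of ψ
  obtain ⟨η₀, hη₀⟩ := Function.ne_iff.mp hψ
  set m : ℕ := W η₀ with hm
  set χ : (Fin L → Fin 2) → ℂ := P (m : ℤ) ψ with hχdef
  have hχpure : P (m : ℤ) χ = χ := P_P _ _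
  have hχ0 : χ ≠ 0 := by
    intro hc
    have := congrFun hc η₀
    rw [hχdef] at this
    simp only [P, if_pos rfl, Pi.zero_apply] at this
    exact hη₀ (by simpa [hm] using this)
  have hχeig : Cm.mulVec χ = μ • χ := by
    rw [hχdef, shift_mulVec_P hCshift, add_zero, hCψ, P_smul]
  -- the S⁻ chain
  set D : ℕ → (Fin L → Fin 2) → ℂ := fun j => (fun v => (SM q L).mulVec v)^[j] χ with hD
  have hDsucc : ∀ j, D (j + 1) = (SM q L).mulVec (D j) := by
    intro j
    rw [hD]
    exact Function.iterate_succ_apply' _ j χ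
  have hDpure : ∀ j : ℕ, P ((m : ℤ) + j) (D j) = D j := by
    intro j
    induction j with
    | zero => simpa [hD] using hχpure
    | succ n ih =>
        have h1 := pure_step (Shift_SM q) ih
        rw [← hDsucc n] at h1
        rw [show ((m : ℤ) + ((n + 1 : ℕ) : ℤ)) = ((m : ℤ) + (n : ℕ)) + 1 by push_cast; ring]
        exact h1
  have hDeig : ∀ j : ℕ, Cm.mulVec (D j) = μ • D j := by
    intro j
    induction j with
    | zero => exact hχeig
    | succ n ih =>
        rw [hDsucc n, hCSM _ _ (hDpure n), ih, Matrix.mulVec_smul]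
  have hDzero : D (L + 1) = 0 := by
    refine pure_eq_zero (hDpure (L + 1)) (Or.inr ?_)
    push_cast
    omega
  have hlast : ∀ N : ℕ, D N = 0 → ∃ j, D j ≠ 0 ∧ D (j + 1) = 0 := by
    intro N
    induction N with
    | zero => intro h0; exact absurd h0 hχ0
    | succ n ih =>
        intro h
        by_cases hn : D n = 0
        · exact ih hn
        · exact ⟨n, hn, h⟩
  obtain ⟨j₀, hj₀, hj₀'⟩ := hlast (L + 1) hDzero
  set n : ℕ := m + j₀ with hn
  set φ : (Fin L → Fin 2) → ℂ := D j₀ with hφ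
  have hφpure : P (n : ℤ) φ = φ := by
    have h1 := hDpure j₀
    rw [← hφ] at h1
    rw [show ((n : ℕ) : ℤ) = (m : ℤ) + (j₀ : ℕ) by rw [hn]; push_cast; ring]
    exact h1
  have hSMφ : (SM q L).mulVec φ = 0 := by rw [hφ, ← hDsucc j₀]; exact hj₀'
  have hφeig : Cm.mulVec φ = μ • φ := hDeig j₀
  have hnL : n ≤ L := by
    obtain ⟨η₁, hη₁⟩ := Function.ne_iff.mp hj₀
    have h1 : (W η₁ : ℤ) = (n : ℤ) := pure_W hφpure hη₁
    have := W_le η₁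
    omega
  -- μ = scal q L n
  have hμ : μ = scal q L n := by
    have h1 : Cm.mulVec φ = scal q L (n : ℤ) • φ := by
      rw [hCact _ _ hφpure, hSMφ, Matrix.mulVec_zero, zero_add]
    obtain ⟨η₁, hη₁⟩ := Function.ne_iff.mp hj₀
    have h2 := congrFun (hφeig.symm.trans h1) η₁
    simp only [Pi.smul_apply, smul_eq_mul] at h2
    exact mul_right_cancel₀ hη₁ h2
  -- the S⁺ chain
  set U : ℕ → (Fin L → Fin 2) → ℂ := fun j => (fun v => (SP q L).mulVec v)^[j] φ with hU
  have hUsucc : ∀ j, U (j + 1) = (SP q L).mulVec (U j) := by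
    intro j
    rw [hU]
    exact Function.iterate_succ_apply' _ j φ
  have hUpure : ∀ j : ℕ, P ((n : ℤ) - j) (U j) = U j := by
    intro j
    induction j with
    | zero => simpa [hU] using hφpure
    | succ i ih =>
        have h1 := pure_step (Shift_SP q) ih
        rw [← hUsucc i] at h1
        rw [show ((n : ℤ) - ((i + 1 : ℕ) : ℤ)) = ((n : ℤ) - (i : ℕ)) + (-1) by push_cast; ring]
        exact h1
  set w : ℤ := 2 * (n : ℤ) - L with hw
  have hgf : ∀ j : ℕ, gfun q L ((n : ℤ) - (j : ℤ)) =
      ((q : ℂ)⁻¹ - (q : ℂ))⁻¹ *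
        ((q : ℂ) ^ (w - 2 * (j : ℤ)) - (q : ℂ) ^ (2 * (j : ℤ) - w)) := by
    intro j
    rw [gfun, show 2 * ((n : ℤ) - (j : ℤ)) - (L : ℤ) = w - 2 * (j : ℤ) by rw [hw]; ring,
      show (L : ℤ) - 2 * ((n : ℤ) - (j : ℤ)) = 2 * (j : ℤ) - w by rw [hw]; ring]
  have hSU : ∀ j : ℕ, (SM q L).mulVec (U (j + 1)) = cf q w (j + 1) • U j := by
    intro j
    induction j with
    | zero =>
        rw [hUsucc 0, show U 0 = φ from rfl, comm_mulVec_pure q hq0 hΔ hφpure, hSMφ,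
          Matrix.mulVec_zero, zero_sub, cf_succ q hq0 hΔ w 0, cf_zero q w, zero_sub,
          neg_smul, ← hgf 0, show ((n : ℤ) - ((0 : ℕ) : ℤ)) = (n : ℤ) by push_cast; ring]
    | succ i ih =>
        rw [hUsucc (i + 1), comm_mulVec_pure q hq0 hΔ (hUpure (i + 1)), ih,
          Matrix.mulVec_smul, ← hUsucc i, cf_succ q hq0 hΔ w (i + 1), ← hgf (i + 1), sub_smul]
  -- termination of the S⁺ chain
  have hU0 : U (n + 1) = 0 := by
    refine pure_eq_zero (hUpure (n + 1)) (Or.inl ?_)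
    push_cast
    omega
  have hlastU : ∀ N : ℕ, U N = 0 → ∃ j, U j ≠ 0 ∧ U (j + 1) = 0 := by
    intro N
    induction N with
    | zero => intro h0; exact absurd h0 hj₀
    | succ i ih =>
        intro h
        by_cases hi : U i = 0
        · exact ih hi
        · exact ⟨i, hi, h⟩
  obtain ⟨j₁, hj₁, hj₁'⟩ := hlastU (n + 1) hU0
  have hczero : cf q w (j₁ + 1) = 0 := by
    have h1 := hSU j₁
    rw [hj₁', Matrix.mulVec_zero] at h1
    rcases smul_eq_zero.mp h1.symm with h | h
    · exact h
    · exact absurd h hj₁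
  -- extract w = j₁
  have hwj : w = (j₁ : ℤ) := by
    rw [cf] at hczero
    rcases mul_eq_zero.mp hczero with h | h
    · exact absurd h (inv_ne_zero hΔ2)
    rcases mul_eq_zero.mp h with h | h
    · exfalso
      have h2 : (q : ℂ) ^ (((j₁ + 1 : ℕ)) : ℤ) = (q : ℂ) ^ (-(((j₁ + 1 : ℕ)) : ℤ)) :=
        sub_eq_zero.mp h
      have := hinj h2
      omega
    · have h2 : (q : ℂ) ^ (w - (((j₁ + 1 : ℕ)) : ℤ) + 1)
          = (q : ℂ) ^ ((((j₁ + 1 : ℕ)) : ℤ) - 1 - w) := sub_eq_zero.mp h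
      have := hinj h2
      push_cast at this
      omega
  refine ⟨j₁, by omega, ?_⟩
  rw [hμ, scal]
  have ha : (q : ℂ)⁻¹ * (q : ℂ) ^ ((L : ℤ) - 2 * (n : ℤ)) = (q : ℂ) ^ (-(j₁ + 1 : ℤ)) := by
    have h1 : ((L : ℤ) - 2 * (n : ℤ)) = -(j₁ : ℤ) := by omega
    rw [h1, show (-(j₁ + 1 : ℤ)) = (-1 : ℤ) + (-(j₁ : ℤ)) by ring, zpow_add₀ hq0,
      _root_.zpow_neg_one]
  have hb : (q : ℂ) * (q : ℂ) ^ (2 * (n : ℤ) - (L : ℤ)) = (q : ℂ) ^ ((j₁ + 1 : ℕ)) := by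
    have h1 : (2 * (n : ℤ) - (L : ℤ)) = (j₁ : ℤ) := by omega
    rw [h1, ← zpow_natCast (q : ℂ) (j₁ + 1),
      show (((j₁ + 1 : ℕ)) : ℤ) = 1 + (j₁ : ℤ) by push_cast; ring, zpow_add₀ hq0, zpow_one]
  rw [ha, hb, div_eq_mul_inv, mul_comm]

end Suq2Aux

/-- Every eigenvalue of the `SU_q(2)` Casimir operator
`C = S⁺S⁻ + ((qT)⁻¹ + qT)/(q⁻¹ − q)²`, `T = t^{⊗L}`, on `(ℂ²)^{⊗L}` is of the
form `(q^{−(2S+1)} + q^{2S+1})/(q⁻¹ − q)²` with `S ∈ {0, 1/2, 1, ..., L/2}`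
(below, `S = k/2` with `k ≤ L`). -/
theorem suq2_casimir_eigenvalues
    (L : ℕ) (q : ℝ) (hq : 0 < q) (hq1 : q < 1)
    (tmat tmatInv sp sm : Matrix (Fin 2) (Fin 2) ℂ)
    (htmat : tmat = !![(q : ℂ)⁻¹, 0; 0, (q : ℂ)])
    (htmatInv : tmatInv = !![(q : ℂ), 0; 0, (q : ℂ)⁻¹])
    (hsp : sp = !![0, 1; 0, 0]) (hsm : sm = !![0, 0; 1, 0])
    (Splus Sminus : Matrix (Fin L → Fin 2) (Fin L → Fin 2) ℂ)
    (hSplus : Splus = ∑ x : Fin L, stringOp tmat sp 1 x)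
    (hSminus : Sminus = ∑ x : Fin L, stringOp 1 sm tmatInv x)
    (T Tinv : Matrix (Fin L → Fin 2) (Fin L → Fin 2) ℂ)
    (hT : T = Matrix.diagonal (fun η : Fin L → Fin 2 =>
      ∏ x, if η x = 0 then (q : ℂ)⁻¹ else (q : ℂ)))
    (hTinv : Tinv = Matrix.diagonal (fun η : Fin L → Fin 2 =>
      ∏ x, if η x = 0 then (q : ℂ) else (q : ℂ)⁻¹))
    (C : Matrix (Fin L → Fin 2) (Fin L → Fin 2) ℂ)
    (hC : C = Splus * Sminus +
      (((q : ℂ)⁻¹ - (q : ℂ))^2)⁻¹ • ((q : ℂ)⁻¹ • Tinv + (q : ℂ) • T)) :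
    ∀ μ : ℂ, (∃ ψ : (Fin L → Fin 2) → ℂ, ψ ≠ 0 ∧ C.mulVec ψ = μ • ψ) →
      ∃ k : ℕ, k ≤ L ∧
        μ = ((q : ℂ) ^ (-(k + 1 : ℤ)) + (q : ℂ) ^ ((k + 1 : ℕ))) /
          ((q : ℂ)⁻¹ - (q : ℂ))^2 := by
  subst htmat htmatInv hsp hsm hSplus hSminus hT hTinv hC
  rintro μ ⟨ψ, hψ, hCψ⟩
  have h1 : (∑ x : Fin L, stringOp !![(q : ℂ)⁻¹, 0; 0, (q : ℂ)] !![0, 1; 0, 0] 1 x)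
      = Suq2Aux.SP q L := rfl
  have h2 : (∑ x : Fin L, stringOp 1 !![0, 0; 1, 0] !![(q : ℂ), 0; 0, (q : ℂ)⁻¹] x)
      = Suq2Aux.SM q L := rfl
  have h3 : Matrix.diagonal (fun η : Fin L → Fin 2 =>
      ∏ x, if η x = 0 then (q : ℂ)⁻¹ else (q : ℂ)) = Suq2Aux.TD q L := rfl
  have h4 : Matrix.diagonal (fun η : Fin L → Fin 2 =>
      ∏ x, if η x = 0 then (q : ℂ) else (q : ℂ)⁻¹) = Suq2Aux.TI q L := rfl
  rw [h1, h2, h3, h4] at hCψ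
  exact Suq2Aux.key hq hq1 μ ψ hψ hCψ
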